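/- arXiv:1809.07133 — 4 statements merged into one kernel-verified Lean document; each statement's English description precedes it below -/
import Mathlib

section
/- The top-aggregation function α_v(s) = M_v(s) - M_{-v}(s), where M_v(s) = max{0, v₁s₁, ..., vₙsₙ}, is Lipschitz-continuous on [0,1]ⁿ with respect to the maximum norm with Lipschitz constant min{2, Σᵢ |vᵢ|}. -/
noncomputable def Mtop {n : ℕ} (v s : Fin n → ℝ) : ℝ :=
  sSup (insert (0:ℝ) (Set.range fun i => v i * s i))

lemma Mtop_bdd {n : ℕ} (v s : Fin n → ℝ) :
    BddAbove (insert (0:ℝ) (Set.range fun i => v i * s i)) :=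
  ((Set.finite_range _).insert 0).bddAbove

lemma Mtop_nonneg {n : ℕ} (v s : Fin n → ℝ) : 0 ≤ Mtop v s :=
  le_csSup (Mtop_bdd v s) (Set.mem_insert _ _)

lemma le_Mtop {n : ℕ} (v s : Fin n → ℝ) (i : Fin n) : v i * s i ≤ Mtop v s :=
  le_csSup (Mtop_bdd v s) (Set.mem_insert_of_mem _ ⟨i, rfl⟩)

lemma Mtop_le {n : ℕ} (v s : Fin n → ℝ) {c : ℝ} (h0 : 0 ≤ c)
    (h : ∀ i, v i * s i ≤ c) : Mtop v s ≤ c := by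
  apply csSup_le ⟨0, Set.mem_insert _ _⟩
  rintro x (rfl | ⟨i, rfl⟩)
  · exact h0
  · exact h i

lemma Mtop_sub_le_norm {n : ℕ} (v s s' : Fin n → ℝ) (hv : ∀ i, |v i| ≤ 1) :
    Mtop v s - Mtop v s' ≤ ‖s - s'‖ := by
  rw [sub_le_iff_le_add]
  apply Mtop_le _ _ (add_nonneg (norm_nonneg _) (Mtop_nonneg v s'))
  intro i
  have h1 : v i * s' i ≤ Mtop v s' := le_Mtop v s' i
  have h2 : |s i - s' i| ≤ ‖s - s'‖ := by
    have := norm_le_pi_norm (s - s') i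
    simpa [Real.norm_eq_abs] using this
  have h3 : |v i * (s i - s' i)| ≤ |s i - s' i| := by
    rw [abs_mul]
    nlinarith [abs_nonneg (s i - s' i), hv i]
  have h4 : v i * (s i - s' i) ≤ |v i * (s i - s' i)| := le_abs_self _
  nlinarith
  
lemma Mtop_sub_le_sum {n : ℕ} (v s s' : Fin n → ℝ)
    (hv : ∀ i, v i = -1 ∨ v i = 0 ∨ v i = 1)
    (hs : ∀ i, 0 ≤ s i) :
    Mtop v s - Mtop v s' ≤ ∑ i, (if v i = 1 then |s i - s' i| else 0) := by
  rw [sub_le_iff_le_add]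
  have hsum : (0:ℝ) ≤ ∑ i, (if v i = 1 then |s i - s' i| else 0) :=
    Finset.sum_nonneg fun i _ => by positivity
  apply Mtop_le _ _ (by linarith [Mtop_nonneg v s'])
  intro i
  rcases hv i with h | h | h
  · rw [h]; nlinarith [hs i, Mtop_nonneg v s']
  · rw [h]; simpa using by linarith [Mtop_nonneg v s']
  · rw [h, one_mul]
    have h1 : s' i ≤ Mtop v s' := by
      have := le_Mtop v s' i; rwa [h, one_mul] at this
    have h2 : (if v i = 1 then |s i - s' i| else 0) ≤
        ∑ j, (if v j = 1 then |s j - s' j| else 0) :=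
      Finset.single_le_sum (f := fun j => if v j = 1 then |s j - s' j| else 0)
        (fun j _ => by positivity) (Finset.mem_univ i)
    rw [if_pos h] at h2
    have h3 : s i - s' i ≤ |s i - s' i| := le_abs_self _
    linarith

theorem top_aggregation_lipschitz {n : ℕ} (v : Fin n → ℝ)
    (hv : ∀ i, v i = -1 ∨ v i = 0 ∨ v i = 1)
    (s s' : Fin n → ℝ)
    (hs : ∀ i, s i ∈ Set.Icc (0:ℝ) 1) (hs' : ∀ i, s' i ∈ Set.Icc (0:ℝ) 1) :
    |(Mtop v s - Mtop (-v) s) - (Mtop v s' - Mtop (-v) s')| ≤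
      min 2 (∑ i, |v i|) * ‖s - s'‖ := by
  set D := ‖s - s'‖ with hD
  have hD0 : 0 ≤ D := norm_nonneg _
  have hv1 : ∀ i, |v i| ≤ 1 := by
    intro i; rcases hv i with h | h | h <;> rw [h] <;> norm_num
  have hnv1 : ∀ i, |(-v) i| ≤ 1 := by
    intro i; simpa using hv1 i
  have hnv : ∀ i, (-v) i = -1 ∨ (-v) i = 0 ∨ (-v) i = 1 := by
    intro i; rcases hv i with h | h | h <;> simp [h]
  have hsnn : ∀ i, 0 ≤ s i := fun i => (hs i).1
  have hsnn' : ∀ i, 0 ≤ s' i := fun i => (hs' i).1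
  have hDsym : ‖s' - s‖ = D := by rw [hD, norm_sub_rev]
  -- bound by 2 * D
  have hA1 := Mtop_sub_le_norm v s s' hv1
  have hA2 := Mtop_sub_le_norm v s' s hv1
  have hA3 := Mtop_sub_le_norm (-v) s s' hnv1
  have hA4 := Mtop_sub_le_norm (-v) s' s hnv1
  rw [hDsym] at hA2 hA4
  have bound2 : |(Mtop v s - Mtop (-v) s) - (Mtop v s' - Mtop (-v) s')| ≤ 2 * D :=
    abs_le.2 ⟨by linarith, by linarith⟩
  -- bound by (∑ |v i|) * D
  have key : ∀ i, (if v i = 1 then |s i - s' i| else 0) +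
      (if (-v) i = 1 then |s' i - s i| else 0) ≤ |v i| * D := by
    intro i
    have hd : |s i - s' i| ≤ D := by
      have := norm_le_pi_norm (s - s') i
      simpa [Real.norm_eq_abs] using this
    have hd' : |s' i - s i| ≤ D := by rwa [abs_sub_comm]
    rcases hv i with h | h | h <;> norm_num [h, Pi.neg_apply] <;> linarith
  have sumkey : (∑ i, (if v i = 1 then |s i - s' i| else 0)) +
      (∑ i, (if (-v) i = 1 then |s' i - s i| else 0)) ≤ (∑ i, |v i|) * D := by
    rw [← Finset.sum_add_distrib, Finset.sum_mul]
    exact Finset.sum_le_sum fun i _ => key i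
  have sumkey' : (∑ i, (if v i = 1 then |s' i - s i| else 0)) +
      (∑ i, (if (-v) i = 1 then |s i - s' i| else 0)) ≤ (∑ i, |v i|) * D := by
    rw [← Finset.sum_add_distrib, Finset.sum_mul]
    refine Finset.sum_le_sum fun i _ => ?_
    have hd : |s i - s' i| ≤ D := by
      have := norm_le_pi_norm (s - s') i
      simpa [Real.norm_eq_abs] using this
    have hd' : |s' i - s i| ≤ D := by rwa [abs_sub_comm]
    rcases hv i with h | h | h <;> norm_num [h, Pi.neg_apply] <;> linarith
  have hB1 := Mtop_sub_le_sum v s s' hv hsnn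
  have hB2 := Mtop_sub_le_sum (-v) s' s hnv hsnn'
  have hB3 := Mtop_sub_le_sum v s' s hv hsnn'
  have hB4 := Mtop_sub_le_sum (-v) s s' hnv hsnn
  have boundS : |(Mtop v s - Mtop (-v) s) - (Mtop v s' - Mtop (-v) s')| ≤
      (∑ i, |v i|) * D :=
    abs_le.2 ⟨by linarith, by linarith⟩
  rw [min_mul_of_nonneg _ _ hD0]
  exact le_min bound2 boundS
end

section
/- The Euler-based influence function ι_w(s) = 1 - (1-w²)/(1 + w·eˢ) is Lipschitz-continuous on ℝ with Lipschitz constant 1/4, for any w ∈ [0,1]. -/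
theorem euler_influence_lipschitz (w : ℝ) (hw : w ∈ Set.Icc (0:ℝ) 1) (s t : ℝ) :
    |(1 - (1 - w ^ 2) / (1 + w * Real.exp s)) -
     (1 - (1 - w ^ 2) / (1 + w * Real.exp t))| ≤ (1 / 4) * |s - t| := by
  obtain ⟨hw0, hw1⟩ := hw
  set f : ℝ → ℝ := fun x => 1 - (1 - w ^ 2) / (1 + w * Real.exp x) with hf
  have hpos : ∀ x : ℝ, 0 < 1 + w * Real.exp x := fun x => by positivity
  have hderiv : ∀ x : ℝ,
      HasDerivAt f ((1 - w ^ 2) * (w * Real.exp x) / (1 + w * Real.exp x) ^ 2) x := by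
    intro x
    have h1 : HasDerivAt (fun y : ℝ => 1 + w * Real.exp y) (w * Real.exp x) x := by
      simpa using ((Real.hasDerivAt_exp x).const_mul w).const_add 1
    have h2 := (((hasDerivAt_const x (1 - w ^ 2)).div h1 (hpos x).ne')).const_sub 1
    exact h2.congr_deriv (by ring)
  have hbound : ∀ x : ℝ,
      ‖(1 - w ^ 2) * (w * Real.exp x) / (1 + w * Real.exp x) ^ 2‖ ≤ 1 / 4 := by
    intro x
    set u := w * Real.exp x with hu
    have hu0 : 0 ≤ u := by positivity
    have h1 : 0 ≤ (1 - w ^ 2) * u / (1 + u) ^ 2 := by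
      apply div_nonneg
      · exact mul_nonneg (by nlinarith) hu0
      · positivity
    rw [Real.norm_eq_abs, abs_of_nonneg h1]
    rw [div_le_iff₀ (by positivity)]
    nlinarith [sq_nonneg (1 - u), sq_nonneg u, Real.exp_pos x]
  have key := Convex.norm_image_sub_le_of_norm_hasDerivWithin_le
    (f := f) (C := 1 / 4) (s := Set.univ)
    (fun x _ => (hderiv x).hasDerivWithinAt)
    (fun x _ => hbound x) convex_univ (Set.mem_univ t) (Set.mem_univ s)
  simpa [hf, Real.norm_eq_abs] using key
end

section
/- The p-Max(κ) influence function ι_w(s) = w - w·h(-s/κ) + (1-w)·h(s/κ), with h(x) = max{0,x}^p/(1+max{0,x}^p), is Lipschitz-continuous on ℝ with Lipschitz constant (p/κ)·max{w, 1-w}, for any w ∈ [0,1], κ > 0, and natural number p ≥ 1. -/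
private lemma pow_succ_sub_pow_succ_le {a b : ℝ} (hb : 0 ≤ b) (hba : b ≤ a) :
    ∀ n : ℕ, a ^ (n + 1) - b ^ (n + 1) ≤ (n + 1) * a ^ n * (a - b) := by
  intro n
  induction n with
  | zero => simp
  | succ n ih =>
    have ha : 0 ≤ a := hb.trans hba
    have h1 : b ^ (n + 1) ≤ a ^ (n + 1) := pow_le_pow_left₀ hb hba _
    have key : a ^ (n + 1 + 1) - b ^ (n + 1 + 1)
        = a * (a ^ (n + 1) - b ^ (n + 1)) + b ^ (n + 1) * (a - b) := by ring
    rw [key]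
    have h2 : a * (a ^ (n + 1) - b ^ (n + 1)) ≤ a * ((n + 1) * a ^ n * (a - b)) :=
      mul_le_mul_of_nonneg_left ih ha
    have h3 : b ^ (n + 1) * (a - b) ≤ a ^ (n + 1) * (a - b) :=
      mul_le_mul_of_nonneg_right h1 (by linarith)
    have h4 : a * ((n + 1) * a ^ n * (a - b)) = (n + 1) * a ^ (n + 1) * (a - b) := by
      ring
    push_cast
    nlinarith [h2, h3, h4]

private lemma hfun_mono_le {p : ℕ} (hp : 1 ≤ p) {a b : ℝ} (hb : 0 ≤ b) (hba : b ≤ a) :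
    b ^ p / (1 + b ^ p) ≤ a ^ p / (1 + a ^ p) ∧
      a ^ p / (1 + a ^ p) - b ^ p / (1 + b ^ p) ≤ p * (a - b) := by
  have ha : 0 ≤ a := hb.trans hba
  have hap : 0 ≤ a ^ p := pow_nonneg ha p
  have hbp : 0 ≤ b ^ p := pow_nonneg hb p
  have hda : (0:ℝ) < 1 + a ^ p := by linarith
  have hdb : (0:ℝ) < 1 + b ^ p := by linarith
  have hpow : b ^ p ≤ a ^ p := pow_le_pow_left₀ hb hba p
  constructor
  · rw [div_le_div_iff₀ hdb hda]; nlinarith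
  · -- a^(p-1) ≤ 1 + a^p
    have hA : a ^ (p - 1) ≤ 1 + a ^ p := by
      rcases le_total a 1 with h1 | h1
      · have := pow_le_one₀ ha h1 (n := p - 1)
        linarith
      · have := pow_le_pow_right₀ h1 (Nat.sub_le p 1)
        linarith
    have hkey : a ^ p - b ^ p ≤ p * a ^ (p - 1) * (a - b) := by
      have h := pow_succ_sub_pow_succ_le hb hba (p - 1)
      rw [Nat.sub_add_cancel hp] at h
      have hc : ((p - 1 : ℕ) : ℝ) + 1 = (p : ℝ) := by
        rw [Nat.cast_sub hp]; push_cast; ring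
      rw [hc] at h
      exact h
    have hA' : 0 ≤ a ^ (p - 1) := pow_nonneg ha _
    rw [div_sub_div _ _ (ne_of_gt hda) (ne_of_gt hdb), div_le_iff₀ (by positivity)]
    have hexp : a ^ p * (1 + b ^ p) - (1 + a ^ p) * b ^ p = a ^ p - b ^ p := by ring
    rw [hexp]
    have hD : 1 + a ^ p ≤ (1 + a ^ p) * (1 + b ^ p) :=
      le_mul_of_one_le_right (le_of_lt hda) (by linarith)
    have hAD : a ^ (p - 1) ≤ (1 + a ^ p) * (1 + b ^ p) := hA.trans hD
    have hpnn : (0:ℝ) ≤ p := Nat.cast_nonneg p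
    nlinarith [mul_le_mul_of_nonneg_left hAD (mul_nonneg hpnn (by linarith : (0:ℝ) ≤ a - b))]

private lemma h_lip {p : ℕ} (hp : 1 ≤ p) {a b : ℝ} (ha : 0 ≤ a) (hb : 0 ≤ b) :
    |a ^ p / (1 + a ^ p) - b ^ p / (1 + b ^ p)| ≤ p * |a - b| := by
  rcases le_total b a with hba | hab
  · obtain ⟨h1, h2⟩ := hfun_mono_le hp hb hba
    rw [abs_of_nonneg (by linarith), abs_of_nonneg (by linarith)]
    exact h2
  · obtain ⟨h1, h2⟩ := hfun_mono_le hp ha hab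
    rw [abs_sub_comm, abs_sub_comm a b, abs_of_nonneg (by linarith),
      abs_of_nonneg (by linarith)]
    exact h2

theorem pMax_influence_lipschitz (w κ : ℝ) (p : ℕ)
    (hw : w ∈ Set.Icc (0:ℝ) 1) (hκ : 0 < κ) (hp : 1 ≤ p) (s t : ℝ) :
    |(w - w * ((max 0 (-s / κ)) ^ p / (1 + (max 0 (-s / κ)) ^ p)) +
        (1 - w) * ((max 0 (s / κ)) ^ p / (1 + (max 0 (s / κ)) ^ p))) -
     (w - w * ((max 0 (-t / κ)) ^ p / (1 + (max 0 (-t / κ)) ^ p)) +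
        (1 - w) * ((max 0 (t / κ)) ^ p / (1 + (max 0 (t / κ)) ^ p)))| ≤
      ((p : ℝ) / κ) * max w (1 - w) * |s - t| := by
  obtain ⟨hw0, hw1⟩ := hw
  have hw1' : 0 ≤ 1 - w := by linarith
  have hmw : w ≤ max w (1 - w) := le_max_left _ _
  have hmw' : 1 - w ≤ max w (1 - w) := le_max_right _ _
  have hpnn : (0:ℝ) ≤ p := Nat.cast_nonneg p
  set A := max 0 (-s / κ) with hA
  set B := max 0 (s / κ) with hB
  set C := max 0 (-t / κ) with hC
  set D := max 0 (t / κ) with hD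
  have hAn : 0 ≤ A := le_max_left _ _
  have hBn : 0 ≤ B := le_max_left _ _
  have hCn : 0 ≤ C := le_max_left _ _
  have hDn : 0 ≤ D := le_max_left _ _
  have hAC : |A - C| ≤ |s - t| / κ := by
    rw [hA, hC, max_comm 0 _, max_comm 0 (-t/κ)]
    refine (abs_max_sub_max_le_abs _ _ _).trans ?_
    rw [div_sub_div_same, abs_div, abs_of_pos hκ, neg_sub_neg, abs_sub_comm]
  have hBD : |B - D| ≤ |s - t| / κ := by
    rw [hB, hD, max_comm 0 _, max_comm 0 (t/κ)]
    refine (abs_max_sub_max_le_abs _ _ _).trans ?_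
    rw [div_sub_div_same, abs_div, abs_of_pos hκ]
  -- key: for any s, not both max 0 (-s/κ) and max 0 (s/κ) are positive.
  rcases le_total s 0 with hs | hs <;> rcases le_total t 0 with ht | ht
  · -- s ≤ 0, t ≤ 0 : B = D = 0
    have hB0 : B = 0 := max_eq_left (div_nonpos_of_nonpos_of_nonneg hs hκ.le)
    have hD0 : D = 0 := max_eq_left (div_nonpos_of_nonpos_of_nonneg ht hκ.le)
    rw [hB0, hD0]
    have h := h_lip hp hAn hCn
    have : |(w - w * (A ^ p / (1 + A ^ p)) + (1 - w) * (0 ^ p / (1 + 0 ^ p))) -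
        (w - w * (C ^ p / (1 + C ^ p)) + (1 - w) * (0 ^ p / (1 + 0 ^ p)))|
        = w * |A ^ p / (1 + A ^ p) - C ^ p / (1 + C ^ p)| := by
      rw [show (w - w * (A ^ p / (1 + A ^ p)) + (1 - w) * (0 ^ p / (1 + 0 ^ p))) -
        (w - w * (C ^ p / (1 + C ^ p)) + (1 - w) * (0 ^ p / (1 + 0 ^ p)))
        = w * (C ^ p / (1 + C ^ p) - A ^ p / (1 + A ^ p)) from by ring,
        abs_mul, abs_of_nonneg hw0, abs_sub_comm]
    rw [this]
    calc w * |A ^ p / (1 + A ^ p) - C ^ p / (1 + C ^ p)|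
        ≤ w * (p * (|s - t| / κ)) := by
          refine mul_le_mul_of_nonneg_left (h.trans ?_) hw0
          exact mul_le_mul_of_nonneg_left hAC hpnn
      _ ≤ max w (1 - w) * (p * (|s - t| / κ)) := by
          refine mul_le_mul_of_nonneg_right hmw (by positivity)
      _ = ((p : ℝ) / κ) * max w (1 - w) * |s - t| := by ring
  · -- s ≤ 0 ≤ t : B = 0, C = 0
    have hB0 : B = 0 := max_eq_left (div_nonpos_of_nonpos_of_nonneg hs hκ.le)
    have hC0 : C = 0 := max_eq_left (div_nonpos_of_nonpos_of_nonneg (by linarith) hκ.le)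
    rw [hB0, hC0]
    have hz : (0:ℝ) ^ p / (1 + 0 ^ p) = 0 := by
      rw [zero_pow (by omega)]; simp
    rw [hz]
    have hAe : A = -s / κ := max_eq_right (div_nonneg (by linarith) hκ.le)
    have hDe : D = t / κ := max_eq_right (div_nonneg (by linarith) hκ.le)
    have h1 : A ^ p / (1 + A ^ p) ≤ p * A := by
      have := h_lip hp hAn le_rfl
      rw [hz, sub_zero, sub_zero] at this
      calc A ^ p / (1 + A ^ p) ≤ |A ^ p / (1 + A ^ p)| := le_abs_self _
        _ ≤ p * |A| := this
        _ = p * A := by rw [abs_of_nonneg hAn]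
    have h2 : D ^ p / (1 + D ^ p) ≤ p * D := by
      have := h_lip hp hDn le_rfl
      rw [hz, sub_zero, sub_zero] at this
      calc D ^ p / (1 + D ^ p) ≤ |D ^ p / (1 + D ^ p)| := le_abs_self _
        _ ≤ p * |D| := this
        _ = p * D := by rw [abs_of_nonneg hDn]
    have hApos : 0 ≤ A ^ p / (1 + A ^ p) := by positivity
    have hDpos : 0 ≤ D ^ p / (1 + D ^ p) := by positivity
    have hst : |s - t| = t - s := by rw [abs_sub_comm, abs_of_nonneg (by linarith)]
    rw [hst]
    have habs : |(w - w * (A ^ p / (1 + A ^ p)) + (1 - w) * 0) -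
        (w - w * 0 + (1 - w) * (D ^ p / (1 + D ^ p)))|
        = w * (A ^ p / (1 + A ^ p)) + (1 - w) * (D ^ p / (1 + D ^ p)) := by
      rw [abs_sub_comm, abs_of_nonneg (by nlinarith)]
      ring
    rw [habs]
    have hAle : A = -s / κ := hAe
    have e1 : w * (A ^ p / (1 + A ^ p)) ≤ max w (1 - w) * (p * (-s / κ)) := by
      calc w * (A ^ p / (1 + A ^ p)) ≤ w * (p * A) :=
            mul_le_mul_of_nonneg_left h1 hw0
        _ ≤ max w (1 - w) * (p * A) := by
            refine mul_le_mul_of_nonneg_right hmw (by positivity)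
        _ = max w (1 - w) * (p * (-s / κ)) := by rw [hAe]
    have e2 : (1 - w) * (D ^ p / (1 + D ^ p)) ≤ max w (1 - w) * (p * (t / κ)) := by
      calc (1 - w) * (D ^ p / (1 + D ^ p)) ≤ (1 - w) * (p * D) :=
            mul_le_mul_of_nonneg_left h2 hw1'
        _ ≤ max w (1 - w) * (p * D) := by
            refine mul_le_mul_of_nonneg_right hmw' (by positivity)
        _ = max w (1 - w) * (p * (t / κ)) := by rw [hDe]
    have : max w (1 - w) * (p * (-s / κ)) + max w (1 - w) * (p * (t / κ))
        = ((p : ℝ) / κ) * max w (1 - w) * (t - s) := by field_simp; ring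
    linarith
  · -- t ≤ 0 ≤ s : A = 0, D = 0
    have hA0 : A = 0 := max_eq_left (div_nonpos_of_nonpos_of_nonneg (by linarith) hκ.le)
    have hD0 : D = 0 := max_eq_left (div_nonpos_of_nonpos_of_nonneg ht hκ.le)
    rw [hA0, hD0]
    have hz : (0:ℝ) ^ p / (1 + 0 ^ p) = 0 := by
      rw [zero_pow (by omega)]; simp
    rw [hz]
    have hBe : B = s / κ := max_eq_right (div_nonneg (by linarith) hκ.le)
    have hCe : C = -t / κ := max_eq_right (div_nonneg (by linarith) hκ.le)
    have h1 : B ^ p / (1 + B ^ p) ≤ p * B := by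
      have := h_lip hp hBn le_rfl
      rw [hz, sub_zero, sub_zero] at this
      calc B ^ p / (1 + B ^ p) ≤ |B ^ p / (1 + B ^ p)| := le_abs_self _
        _ ≤ p * |B| := this
        _ = p * B := by rw [abs_of_nonneg hBn]
    have h2 : C ^ p / (1 + C ^ p) ≤ p * C := by
      have := h_lip hp hCn le_rfl
      rw [hz, sub_zero, sub_zero] at this
      calc C ^ p / (1 + C ^ p) ≤ |C ^ p / (1 + C ^ p)| := le_abs_self _
        _ ≤ p * |C| := this
        _ = p * C := by rw [abs_of_nonneg hCn]
    have hBpos : 0 ≤ B ^ p / (1 + B ^ p) := by positivity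
    have hCpos : 0 ≤ C ^ p / (1 + C ^ p) := by positivity
    have hst : |s - t| = s - t := abs_of_nonneg (by linarith)
    rw [hst]
    have habs : |(w - w * 0 + (1 - w) * (B ^ p / (1 + B ^ p))) -
        (w - w * (C ^ p / (1 + C ^ p)) + (1 - w) * 0)|
        = w * (C ^ p / (1 + C ^ p)) + (1 - w) * (B ^ p / (1 + B ^ p)) := by
      rw [abs_of_nonneg (by nlinarith)]
      ring
    rw [habs]
    have e1 : w * (C ^ p / (1 + C ^ p)) ≤ max w (1 - w) * (p * (-t / κ)) := by
      calc w * (C ^ p / (1 + C ^ p)) ≤ w * (p * C) :=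
            mul_le_mul_of_nonneg_left h2 hw0
        _ ≤ max w (1 - w) * (p * C) := by
            refine mul_le_mul_of_nonneg_right hmw (by positivity)
        _ = max w (1 - w) * (p * (-t / κ)) := by rw [hCe]
    have e2 : (1 - w) * (B ^ p / (1 + B ^ p)) ≤ max w (1 - w) * (p * (s / κ)) := by
      calc (1 - w) * (B ^ p / (1 + B ^ p)) ≤ (1 - w) * (p * B) :=
            mul_le_mul_of_nonneg_left h1 hw1'
        _ ≤ max w (1 - w) * (p * B) := by
            refine mul_le_mul_of_nonneg_right hmw' (by positivity)
        _ = max w (1 - w) * (p * (s / κ)) := by rw [hBe]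
    have : max w (1 - w) * (p * (-t / κ)) + max w (1 - w) * (p * (s / κ))
        = ((p : ℝ) / κ) * max w (1 - w) * (s - t) := by field_simp; ring
    linarith
  · -- 0 ≤ s, 0 ≤ t : A = C = 0
    have hA0 : A = 0 := max_eq_left (div_nonpos_of_nonpos_of_nonneg (by linarith) hκ.le)
    have hC0 : C = 0 := max_eq_left (div_nonpos_of_nonpos_of_nonneg (by linarith) hκ.le)
    rw [hA0, hC0]
    have h := h_lip hp hBn hDn
    have : |(w - w * (0 ^ p / (1 + 0 ^ p)) + (1 - w) * (B ^ p / (1 + B ^ p))) -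
        (w - w * (0 ^ p / (1 + 0 ^ p)) + (1 - w) * (D ^ p / (1 + D ^ p)))|
        = (1 - w) * |B ^ p / (1 + B ^ p) - D ^ p / (1 + D ^ p)| := by
      rw [show (w - w * (0 ^ p / (1 + 0 ^ p)) + (1 - w) * (B ^ p / (1 + B ^ p))) -
        (w - w * (0 ^ p / (1 + 0 ^ p)) + (1 - w) * (D ^ p / (1 + D ^ p)))
        = (1 - w) * (B ^ p / (1 + B ^ p) - D ^ p / (1 + D ^ p)) from by ring,
        abs_mul, abs_of_nonneg hw1']
    rw [this]
    calc (1 - w) * |B ^ p / (1 + B ^ p) - D ^ p / (1 + D ^ p)|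
        ≤ (1 - w) * (p * (|s - t| / κ)) := by
          refine mul_le_mul_of_nonneg_left (h.trans ?_) hw1'
          exact mul_le_mul_of_nonneg_left hBD hpnn
      _ ≤ max w (1 - w) * (p * (|s - t| / κ)) := by
          refine mul_le_mul_of_nonneg_right hmw' (by positivity)
      _ = ((p : ℝ) / κ) * max w (1 - w) * |s - t| := by ring
end

section
/- The Euler-based influence function ι_w(s) = 1 - (1-w²)/(1 + w·eˢ) satisfies ι_w(s) ≥ w² for all s ∈ ℝ and w ∈ [0,1], and lim_{s → -∞} ι_w(s) = w²; hence for w > 0 it is not open-minded (its infimum w² is strictly positive). -/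
open Filter

theorem euler_not_open_minded (w : ℝ) (hw : w ∈ Set.Icc (0:ℝ) 1) :
    (∀ s : ℝ, w ^ 2 ≤ 1 - (1 - w ^ 2) / (1 + w * Real.exp s)) ∧
    Tendsto (fun s : ℝ => 1 - (1 - w ^ 2) / (1 + w * Real.exp s)) atBot (nhds (w ^ 2)) ∧
    (0 < w → ¬ Tendsto (fun s : ℝ => 1 - (1 - w ^ 2) / (1 + w * Real.exp s)) atBot (nhds 0)) := by
  obtain ⟨hw0, hw1⟩ := hw
  have hnum : 0 ≤ 1 - w ^ 2 := by nlinarith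
  have hlim : Tendsto (fun s : ℝ => 1 - (1 - w ^ 2) / (1 + w * Real.exp s)) atBot
      (nhds (w ^ 2)) := by
    have h1 : Tendsto (fun s : ℝ => 1 + w * Real.exp s) atBot (nhds 1) := by
      have := (Real.tendsto_exp_atBot.const_mul w).const_add 1
      simpa using this
    have h2 : Tendsto (fun s : ℝ => 1 - (1 - w ^ 2) / (1 + w * Real.exp s)) atBot
        (nhds (1 - (1 - w ^ 2) / 1)) :=
      (tendsto_const_nhds.div h1 one_ne_zero).const_sub 1
    simpa using h2
  refine ⟨fun s => ?_, hlim, fun hwpos hcon => ?_⟩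
  · have he : 0 < Real.exp s := Real.exp_pos s
    have hden : (1:ℝ) ≤ 1 + w * Real.exp s := by nlinarith
    have : (1 - w ^ 2) / (1 + w * Real.exp s) ≤ 1 - w ^ 2 := by
      rw [div_le_iff₀ (by linarith)]
      nlinarith
    linarith
  · have := tendsto_nhds_unique hlim hcon
    nlinarith
end
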